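/- Let k₀ ∈ ℝ, k₀ ≠ 0, and let ψ be a C² nonvanishing function on [-1,1] satisfying -ψ'' + Uψ = k₀²ψ (with U := (ψ'' + k₀²ψ)/ψ), the boundary conditions ψ(±1) = 1, ψ'(±1) = ±i k₀, and the integral condition ∫_{-1}^{1} ψ(x)² dx = 1/(i k₀). Define φ(x) = ψ(x)·[ i + β - i e^{2ik₀} ∫_{-1}^{x} dζ/ψ(ζ)² - 2k₀ ∫_{-1}^{x} (1/ψ(ζ)²) (∫_{-1}^{ζ} ψ(ζ')² dζ') dζ ] for any constant β ∈ ℂ. Then φ satisfies -φ'' + U φ - k₀² φ = 2 k₀ ψ on (-1,1). -/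

import Mathlib

/-- Explicit construction of the associated (Jordan-chain) function φ for a
second-order spectral singularity. -/
theorem stmt_13 (k₀ : ℝ) (hk : k₀ ≠ 0) (ψ : ℝ → ℂ)
    (hψ : ContDiff ℝ 2 ψ)
    (hψ0 : ∀ x ∈ Set.Icc (-1 : ℝ) 1, ψ x ≠ 0)
    (U : ℝ → ℂ)
    (hU : ∀ x ∈ Set.Icc (-1 : ℝ) 1,
      U x = (deriv (deriv ψ) x + (k₀ : ℂ) ^ 2 * ψ x) / ψ x)
    (hbp : ψ 1 = 1) (hbm : ψ (-1) = 1)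
    (hbp' : deriv ψ 1 = Complex.I * k₀) (hbm' : deriv ψ (-1) = -(Complex.I * k₀))
    (hint : (∫ x in (-1 : ℝ)..1, (ψ x) ^ 2) = 1 / (Complex.I * k₀))
    (β : ℂ) (φ : ℝ → ℂ)
    (hφdef : ∀ x ∈ Set.Icc (-1 : ℝ) 1,
      φ x = ψ x * (Complex.I + β
        - Complex.I * Complex.exp (2 * Complex.I * k₀) *
            (∫ ζ in (-1 : ℝ)..x, 1 / (ψ ζ) ^ 2)
        - 2 * k₀ * (∫ ζ in (-1 : ℝ)..x,
            (1 / (ψ ζ) ^ 2) * (∫ ζ' in (-1 : ℝ)..ζ, (ψ ζ') ^ 2)))) :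
    ∀ x ∈ Set.Ioo (-1 : ℝ) 1,
      -(deriv (deriv φ) x) + U x * φ x - (k₀ : ℂ) ^ 2 * φ x = 2 * k₀ * ψ x := by
  intro x hx
  have hxI : x ∈ Set.Icc (-1 : ℝ) 1 := Set.Ioo_subset_Icc_self hx
  have hψc : Continuous ψ := hψ.continuous
  have hψd : Differentiable ℝ ψ := hψ.differentiable two_ne_zero
  have hψ'd : Differentiable ℝ (deriv ψ) := by
    have h2 : ContDiff ℝ ((1 : ℕ) + 1) ψ := by exact_mod_cast hψ
    exact (contDiff_succ_iff_deriv.mp h2).2.2.differentiable (by norm_num)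
  set c : ℂ := Complex.I * Complex.exp (2 * Complex.I * (k₀ : ℂ)) with hc
  set F : ℝ → ℂ := fun t => ∫ s in (-1 : ℝ)..t, (ψ s) ^ 2 with hFdef
  set G : ℝ → ℂ := fun t => ∫ s in (-1 : ℝ)..t, 1 / (ψ s) ^ 2 with hGdef
  set H : ℝ → ℂ := fun t => ∫ s in (-1 : ℝ)..t,
      (1 / (ψ s) ^ 2) * (∫ s' in (-1 : ℝ)..s, (ψ s') ^ 2) with hHdef
  set g : ℝ → ℂ := fun t => Complex.I + β - c * G t - 2 * (k₀ : ℂ) * H t with hgdef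
  set N : ℝ → ℂ := fun t => -c - 2 * (k₀ : ℂ) * F t with hNdef
  set g₁ : ℝ → ℂ := fun t => N t / (ψ t) ^ 2 with hg₁def
  -- φ = ψ * g on Icc
  have hφg : ∀ t ∈ Set.Icc (-1 : ℝ) 1, φ t = ψ t * g t := by
    intro t ht
    simp only [hgdef, hGdef, hHdef, hFdef, hc]
    exact hφdef t ht
  -- continuity facts
  have hsq : Continuous fun s => (ψ s) ^ 2 := hψc.pow 2
  have hF : ∀ t : ℝ, HasDerivAt F ((ψ t) ^ 2) t := fun t =>
    intervalIntegral.integral_hasDerivAt_right (hsq.intervalIntegrable _ _)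
      (hsq.stronglyMeasurableAtFilter _ _) hsq.continuousAt
  have hFc : Continuous F := continuous_iff_continuousAt.mpr fun t => (hF t).continuousAt
  have hqIcc : ContinuousOn (fun s => 1 / (ψ s) ^ 2) (Set.Icc (-1 : ℝ) 1) := by
    exact ContinuousOn.div continuousOn_const (hψc.continuousOn.pow 2)
      (fun s hs => pow_ne_zero 2 (hψ0 s hs))
  have hqIoo : ContinuousOn (fun s => 1 / (ψ s) ^ 2) (Set.Ioo (-1 : ℝ) 1) :=
    hqIcc.mono Set.Ioo_subset_Icc_self
  have hrIcc : ContinuousOn (fun s => (1 / (ψ s) ^ 2) * (∫ s' in (-1 : ℝ)..s, (ψ s') ^ 2))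
      (Set.Icc (-1 : ℝ) 1) := hqIcc.mul hFc.continuousOn
  have hrIoo : ContinuousOn (fun s => (1 / (ψ s) ^ 2) * (∫ s' in (-1 : ℝ)..s, (ψ s') ^ 2))
      (Set.Ioo (-1 : ℝ) 1) := hrIcc.mono Set.Ioo_subset_Icc_self
  have hsub : ∀ t ∈ Set.Ioo (-1 : ℝ) 1, Set.uIcc (-1 : ℝ) t ⊆ Set.Icc (-1 : ℝ) 1 := by
    intro t ht
    rw [Set.uIcc_of_le (le_of_lt ht.1)]
    exact Set.Icc_subset_Icc le_rfl (le_of_lt ht.2)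
  have hG : ∀ t ∈ Set.Ioo (-1 : ℝ) 1, HasDerivAt G (1 / (ψ t) ^ 2) t := by
    intro t ht
    refine intervalIntegral.integral_hasDerivAt_right
      ((hqIcc.mono (hsub t ht)).intervalIntegrable)
      (hqIoo.stronglyMeasurableAtFilter isOpen_Ioo t ht)
      (hqIoo.continuousAt (isOpen_Ioo.mem_nhds ht))
  have hH : ∀ t ∈ Set.Ioo (-1 : ℝ) 1,
      HasDerivAt H ((1 / (ψ t) ^ 2) * F t) t := by
    intro t ht
    refine intervalIntegral.integral_hasDerivAt_right
      ((hrIcc.mono (hsub t ht)).intervalIntegrable)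
      (hrIoo.stronglyMeasurableAtFilter isOpen_Ioo t ht)
      (hrIoo.continuousAt (isOpen_Ioo.mem_nhds ht))
  -- derivative of g
  have hgD : ∀ t ∈ Set.Ioo (-1 : ℝ) 1, HasDerivAt g (g₁ t) t := by
    intro t ht
    have hψt : ψ t ≠ 0 := hψ0 t (Set.Ioo_subset_Icc_self ht)
    have h := ((hasDerivAt_const t (Complex.I + β)).sub
        ((hG t ht).const_mul c)).sub ((hH t ht).const_mul (2 * (k₀ : ℂ)))
    refine h.congr_deriv ?_
    simp only [hg₁def, hNdef, hFdef]
    field_simp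
    ring
  -- φ has derivative φ₁ on Ioo
  have hevt : ∀ t ∈ Set.Ioo (-1 : ℝ) 1, φ =ᶠ[nhds t] fun y => ψ y * g y := by
    intro t ht
    filter_upwards [isOpen_Ioo.mem_nhds ht] with y hy
    exact hφg y (Set.Ioo_subset_Icc_self hy)
  have hφD : ∀ t ∈ Set.Ioo (-1 : ℝ) 1,
      HasDerivAt φ (deriv ψ t * g t + ψ t * g₁ t) t := by
    intro t ht
    exact ((hψd t).hasDerivAt.mul (hgD t ht)).congr_of_eventuallyEq (hevt t ht)
  have hφ' : ∀ t ∈ Set.Ioo (-1 : ℝ) 1,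
      deriv φ t = deriv ψ t * g t + ψ t * g₁ t :=
    fun t ht => (hφD t ht).deriv
  -- second derivative
  have hψx : ψ x ≠ 0 := hψ0 x hxI
  have hψx2 : (ψ x) ^ 2 ≠ 0 := pow_ne_zero 2 hψx
  have hND : HasDerivAt N (-(2 * (k₀ : ℂ) * (ψ x) ^ 2)) x := by
    have h := (hasDerivAt_const x (-c)).sub ((hF x).const_mul (2 * (k₀ : ℂ)))
    refine h.congr_deriv ?_
    ring
  have hg₁D : HasDerivAt g₁
      ((-(2 * (k₀ : ℂ) * (ψ x) ^ 2) * (ψ x) ^ 2 - N x * (2 * ψ x * deriv ψ x))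
        / ((ψ x) ^ 2) ^ 2) x := by
    have hpow : HasDerivAt (fun t => (ψ t) ^ 2) (2 * ψ x * deriv ψ x) x := by
      have hmul := (hψd x).hasDerivAt.mul (hψd x).hasDerivAt
      have : (fun t => (ψ t) ^ 2) = fun t => ψ t * ψ t := by
        funext t; ring
      rw [this]
      refine hmul.congr_deriv ?_
      ring
    exact hND.div hpow hψx2
  have hφ₁D : HasDerivAt (fun t => deriv ψ t * g t + ψ t * g₁ t)
      ((deriv (deriv ψ) x * g x + deriv ψ x * g₁ x)
        + (deriv ψ x * g₁ x + ψ x *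
          ((-(2 * (k₀ : ℂ) * (ψ x) ^ 2) * (ψ x) ^ 2 - N x * (2 * ψ x * deriv ψ x))
            / ((ψ x) ^ 2) ^ 2))) x :=
    ((hψ'd x).hasDerivAt.mul (hgD x hx)).add ((hψd x).hasDerivAt.mul hg₁D)
  have hdd : deriv (deriv φ) x
      = (deriv (deriv ψ) x * g x + deriv ψ x * g₁ x)
        + (deriv ψ x * g₁ x + ψ x *
          ((-(2 * (k₀ : ℂ) * (ψ x) ^ 2) * (ψ x) ^ 2 - N x * (2 * ψ x * deriv ψ x))
            / ((ψ x) ^ 2) ^ 2)) := by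
    have heq : deriv φ =ᶠ[nhds x] fun t => deriv ψ t * g t + ψ t * g₁ t := by
      filter_upwards [isOpen_Ioo.mem_nhds hx] with y hy
      exact hφ' y hy
    rw [heq.deriv_eq]
    exact hφ₁D.deriv
  rw [hdd, hU x hxI, hφg x hxI, hg₁def]
  field_simp [hψx]
  ring
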